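/- arXiv:2007.01423 — 3 statements merged into one kernel-verified Lean document; each statement's English description precedes it below -/
import Mathlib

section
/- For fixed a positive sample weight and K·P negative weight with P ∈ (0,1], the function f(x) = log σ(x) + K·P·log σ(-x) attains its maximum at x* = log(1/(K·P)); in particular if K·P = 1 the optimum is x* = 0. -/
noncomputable def sigmoid (x : ℝ) : ℝ := 1 / (1 + Real.exp (-x))

lemma sigmoid_pos (x : ℝ) : 0 < sigmoid x := by
  unfold sigmoid; positivity

lemma sigmoid_lt_one (x : ℝ) : sigmoid x < 1 := by
  unfold sigmoid
  rw [div_lt_one (by positivity)]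
  nlinarith [Real.exp_pos (-x)]

lemma sigmoid_neg (x : ℝ) : sigmoid (-x) = 1 - sigmoid x := by
  unfold sigmoid
  have h1 : (0:ℝ) < 1 + Real.exp (-x) := by positivity
  have h2 : (0:ℝ) < 1 + Real.exp x := by positivity
  have hmul : Real.exp x * Real.exp (-x) = 1 := by
    rw [← Real.exp_add]; simp
  field_simp
  nlinarith

lemma key (c t : ℝ) (hc : 0 < c) (ht0 : 0 < t) (ht1 : t < 1) :
    Real.log t + c * Real.log (1 - t) ≤
      Real.log (1 / (1 + c)) + c * Real.log (c / (1 + c)) := by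
  have h1c : (0:ℝ) < 1 + c := by linarith
  have ht1' : (0:ℝ) < 1 - t := by linarith
  have hA : Real.log (t * (1 + c)) ≤ t * (1 + c) - 1 :=
    Real.log_le_sub_one_of_pos (by positivity)
  have hB : Real.log ((1 - t) * (1 + c) / c) ≤ (1 - t) * (1 + c) / c - 1 :=
    Real.log_le_sub_one_of_pos (by positivity)
  rw [Real.log_mul (ne_of_gt ht0) (ne_of_gt h1c)] at hA
  rw [Real.log_div (by positivity) (ne_of_gt hc),
      Real.log_mul (ne_of_gt ht1') (ne_of_gt h1c)] at hB
  have hB' : c * (Real.log (1 - t) + Real.log (1 + c) - Real.log c)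
      ≤ (1 - t) * (1 + c) - c := by
    have := mul_le_mul_of_nonneg_left hB (le_of_lt hc)
    calc c * (Real.log (1 - t) + Real.log (1 + c) - Real.log c)
        ≤ c * ((1 - t) * (1 + c) / c - 1) := this
      _ = (1 - t) * (1 + c) - c := by field_simp
  rw [Real.log_div one_ne_zero (ne_of_gt h1c), Real.log_one,
      Real.log_div (ne_of_gt hc) (ne_of_gt h1c)]
  nlinarith [hA, hB']

/-- The per-pair negative sampling objective `f(x) = log σ(x) + K·P·log σ(-x)`
with `K > 0`, `P ∈ (0,1]`, attains its maximum at `x* = log (1/(K·P))`;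
in particular if `K·P = 1` the optimum is `x* = 0`. -/
theorem per_pair_optimum (K P : ℝ) (hK : 0 < K) (hP : P ∈ Set.Ioc (0 : ℝ) 1) :
    (∀ x : ℝ,
      Real.log (sigmoid x) + K * P * Real.log (sigmoid (-x))
        ≤ Real.log (sigmoid (Real.log (1 / (K * P))))
          + K * P * Real.log (sigmoid (-(Real.log (1 / (K * P)))))) ∧
    (K * P = 1 → Real.log (1 / (K * P)) = 0) := by
  have hc : 0 < K * P := mul_pos hK hP.1
  have hstar : sigmoid (Real.log (1 / (K * P))) = 1 / (1 + K * P) := by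
    unfold sigmoid
    rw [← Real.log_inv, Real.exp_log (by positivity)]
    simp
  constructor
  · intro x
    rw [sigmoid_neg, hstar, sigmoid_neg, hstar]
    have h1c : (0:ℝ) < 1 + K * P := by linarith
    have : 1 - 1 / (1 + K * P) = K * P / (1 + K * P) := by field_simp; ring
    rw [this]
    exact key (K * P) (sigmoid x) hc (sigmoid_pos x) (sigmoid_lt_one x)
  · intro h
    rw [h]; simp
end

section
/- Under DNS, the per-pair objective f_d(x) = α_d·log σ(x) + β_d·log σ(-x) with β_d = c·d (c > 0) is maximized at x_d* = log(α_d/(c·d)); consequently the optimal similarity σ(x_d*) = α_d/(α_d + c·d) is strictly decreasing in d when α_d is constant in d. -/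
lemma sigmoid_log (a b : ℝ) (ha : 0 < a) (hb : 0 < b) :
    sigmoid (Real.log (a / b)) = a / (a + b) := by
  unfold sigmoid
  rw [← Real.log_inv, Real.exp_log (by positivity), inv_div]
  field_simp

/-- Gibbs-type inequality: for `p ∈ (0,1)` and `q = a/(a+b)`,
`a log p + b log (1-p) ≤ a log q + b log (1-q)`. -/
lemma gibbs (a b p : ℝ) (ha : 0 < a) (hb : 0 < b) (hp : 0 < p) (hp1 : p < 1) :
    a * Real.log p + b * Real.log (1 - p)
      ≤ a * Real.log (a / (a + b)) + b * Real.log (b / (a + b)) := by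
  have hab : 0 < a + b := by linarith
  have hq : (0:ℝ) < a / (a + b) := by positivity
  have hq' : (0:ℝ) < b / (a + b) := by positivity
  have h1 : Real.log p - Real.log (a / (a + b)) ≤ p / (a / (a + b)) - 1 := by
    rw [← Real.log_div (ne_of_gt hp) (ne_of_gt hq)]
    exact Real.log_le_sub_one_of_pos (by positivity)
  have h2 : Real.log (1 - p) - Real.log (b / (a + b))
      ≤ (1 - p) / (b / (a + b)) - 1 := by
    rw [← Real.log_div (by linarith) (ne_of_gt hq')]
    exact Real.log_le_sub_one_of_pos (div_pos (by linarith) hq')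
  have e1 : p / (a / (a + b)) = p * (a + b) / a := by
    field_simp
  have e2 : (1 - p) / (b / (a + b)) = (1 - p) * (a + b) / b := by
    field_simp
  have k1 : a * (p / (a / (a + b)) - 1) = (a + b) * p - a := by
    rw [e1]; field_simp
  have k2 : b * ((1 - p) / (b / (a + b)) - 1) = (a + b) * (1 - p) - b := by
    rw [e2]; field_simp
  nlinarith [mul_le_mul_of_nonneg_left h1 ha.le, mul_le_mul_of_nonneg_left h2 hb.le]

/-- Under DNS, `f_d(x) = α·log σ(x) + c·d·log σ(-x)` (with `β_d = c·d`, `c > 0`,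
`α > 0`) is maximized at `x_d* = log (α/(c·d))`, the optimal similarity is
`σ(x_d*) = α/(α + c·d)`, and this is strictly decreasing in `d`. -/
theorem dns_per_pair_optimum (α c : ℝ) (hα : 0 < α) (hc : 0 < c) :
    (∀ d : ℝ, 0 < d → ∀ x : ℝ,
      α * Real.log (sigmoid x) + c * d * Real.log (sigmoid (-x))
        ≤ α * Real.log (sigmoid (Real.log (α / (c * d))))
          + c * d * Real.log (sigmoid (-(Real.log (α / (c * d)))))) ∧
    (∀ d : ℝ, 0 < d → sigmoid (Real.log (α / (c * d))) = α / (α + c * d)) ∧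
    (∀ d₁ d₂ : ℝ, 0 < d₁ → d₁ < d₂ → α / (α + c * d₂) < α / (α + c * d₁)) := by
  have key : ∀ d : ℝ, 0 < d → sigmoid (Real.log (α / (c * d))) = α / (α + c * d) :=
    fun d hd => sigmoid_log α (c * d) hα (by positivity)
  refine ⟨?_, key, ?_⟩
  · intro d hd x
    have hcd : 0 < c * d := by positivity
    have h : 1 - α / (α + c * d) = c * d / (α + c * d) := by
      field_simp; ring
    rw [sigmoid_neg (Real.log (α / (c * d))), key d hd, sigmoid_neg x, h]
    exact gibbs α (c * d) (sigmoid x) hα hcd (sigmoid_pos x) (sigmoid_lt_one x)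
  · intro d₁ d₂ hd₁ h
    have h1 : 0 < α + c * d₁ := by positivity
    gcongr
end

section
/- In a connected graph, if every shortest path between any two non-popular nodes passes through some popular node, then for any nodes u, v the DNS-approx estimate d̂(u,v) = min over popular nodes p, q of [d(u,p) + d(p,q) + d(q,v)] equals the true shortest-path distance d(u,v), provided u and v are not themselves popular and u ≠ v. -/
/-- If every pair of distinct non-popular nodes has some shortest path passing
through a popular node, then the DNS-approx estimate
`min_{p,q ∈ P} [d(u,p) + d(p,q) + d(q,v)]` equals the true distance `d(u,v)`
for all distinct non-popular `u, v`. -/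
theorem dns_approx_exact {V : Type*} [Fintype V] [DecidableEq V]
    (G : SimpleGraph V) (hG : G.Connected) (P : Finset V) (hP : P.Nonempty)
    (hcover : ∀ u v : V, u ∉ P → v ∉ P → u ≠ v →
      ∃ w : G.Walk u v, w.IsPath ∧ w.length = G.dist u v ∧ ∃ x ∈ w.support, x ∈ P) :
    ∀ u v : V, u ∉ P → v ∉ P → u ≠ v →
      (P ×ˢ P).inf' (hP.product hP)
          (fun pq => G.dist u pq.1 + G.dist pq.1 pq.2 + G.dist pq.2 v)
        = G.dist u v := by
  intro u v hu hv huv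
  obtain ⟨w, hwp, hwl, x, hxsup, hxP⟩ := hcover u v hu hv huv
  apply le_antisymm
  · have hx : (x, x) ∈ P ×ˢ P := Finset.mem_product.mpr ⟨hxP, hxP⟩
    refine le_trans (Finset.inf'_le _ hx) ?_
    simp only [SimpleGraph.dist_self, add_zero]
    have h1 : G.dist u x ≤ (w.takeUntil x hxsup).length :=
      SimpleGraph.dist_le _
    have h2 : G.dist x v ≤ (w.dropUntil x hxsup).length :=
      SimpleGraph.dist_le _
    have := SimpleGraph.Walk.take_spec w hxsup
    have hlen : (w.takeUntil x hxsup).length + (w.dropUntil x hxsup).length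
        = w.length := by
      rw [← SimpleGraph.Walk.length_append, this]
    omega
  · apply Finset.le_inf'
    rintro ⟨p, q⟩ _
    calc G.dist u v ≤ G.dist u q + G.dist q v := hG.dist_triangle
      _ ≤ (G.dist u p + G.dist p q) + G.dist q v := by
          have : G.dist u q ≤ G.dist u p + G.dist p q := hG.dist_triangle
          omega
end
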